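/- Let λ denote the Liouville function and let α > 1 be real. If there is a constant c_α > 0 such that for every positive integer N, ∫_0^1 |N^{-1/2} · Σ_{j=1}^{N} λ(j) e^{2πijx}|^α dx ≤ c_α, then there exists a constant C_α > 0 such that for every positive integer N, |Σ_{j=1}^{N} λ(j)| ≤ C_α · N^{1/2 + 1/α}. -/

import Mathlib

open Finset Real Complex MeasureTheory

/-- The Liouville function: `λ n = (-1)^Ω(n)`, where `Ω n` is the number of prime
factors of `n` counted with multiplicity. -/
def liouvilleFun (n : ℕ) : ℤ := (-1) ^ (ArithmeticFunction.cardFactors n)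

-- L1: lower bound on |e(x) - 1|
lemma aux_abs_exp_sub_one {x : ℝ} (hx : 0 ≤ x) (hx2 : x ≤ 1/2) :
    4 * x ≤ ‖Complex.exp (2*π*Complex.I*x) - 1‖ := by
  have hθ : (2*π*Complex.I*x : ℂ) = ((2*π*x : ℝ) : ℂ) * Complex.I := by push_cast; ring
  rw [hθ, Complex.exp_mul_I, ← Complex.ofReal_cos, ← Complex.ofReal_sin]
  have hsin : 2 * x ≤ Real.sin (π * x) := by
    have := Real.mul_le_sin (x := π * x) (by positivity)
      (by nlinarith [Real.pi_pos])
    have hπ : (0:ℝ) < π := Real.pi_pos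
    calc 2 * x = 2 / π * (π * x) := by field_simp
    _ ≤ Real.sin (π * x) := this
  have hsq : (4*x)^2 ≤ (‖(Real.cos (2*π*x) : ℂ) + (Real.sin (2*π*x) : ℂ) * Complex.I - 1‖)^2 := by
    rw [Complex.sq_norm]
    rw [Complex.normSq_apply]
    simp only [Complex.add_re, Complex.sub_re, Complex.ofReal_re, Complex.mul_re,
      Complex.I_re, Complex.I_im, Complex.ofReal_im, Complex.one_re,
      Complex.add_im, Complex.sub_im, Complex.mul_im, Complex.one_im]

    have hcos : Real.cos (2*π*x) = 1 - 2 * Real.sin (π*x)^2 := by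
      have h2 : 2*π*x = 2 * (π * x) := by ring
      rw [h2, Real.cos_two_mul]
      nlinarith [Real.sin_sq_add_cos_sq (π*x)]
    have hpyth := Real.sin_sq_add_cos_sq (2*π*x)
    have hs0 : 0 ≤ Real.sin (π*x) := le_trans (by linarith) hsin
    nlinarith [hsin]
  nlinarith [norm_nonneg ((Real.cos (2*π*x) : ℂ) + (Real.sin (2*π*x) : ℂ) * Complex.I - 1), hsq]

-- L2: Dirichlet kernel bound
lemma aux_dirichlet (N : ℕ) {x : ℝ} (hx : 0 < x) (hx2 : x ≤ 1/2) :
    ‖∑ j ∈ Finset.Icc 1 N, Complex.exp (2*π*Complex.I*j*x)‖ ≤ 1/(2*x) := by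
  set z : ℂ := Complex.exp (2*π*Complex.I*x) with hz
  have habs1 : ‖z‖ = 1 := by
    have : (2*π*Complex.I*x : ℂ) = ((2*π*x : ℝ) : ℂ) * Complex.I := by push_cast; ring
    rw [hz, this, Complex.norm_exp_ofReal_mul_I]
  have hlow : 4 * x ≤ ‖z - 1‖ := aux_abs_exp_sub_one hx.le hx2
  have hz1 : z ≠ 1 := by
    intro hzz
    rw [hzz] at hlow
    simp at hlow
    linarith
  have hterm : ∀ j : ℕ, Complex.exp (2*π*Complex.I*j*x) = z ^ j := by
    intro j
    rw [hz, ← Complex.exp_nat_mul]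
    congr 1
    push_cast
    ring
  simp_rw [hterm]
  have hIcc : Finset.Icc 1 N = Finset.Ico 1 (N+1) := by
    rw [Finset.Ico_add_one_right_eq_Icc]
  rw [hIcc, Finset.sum_Ico_eq_sum_range]
  simp only [Nat.add_sub_cancel]
  have : ∑ i ∈ Finset.range N, z ^ (1 + i) = z * ((z ^ N - 1)/(z - 1)) := by
    rw [← geom_sum_eq hz1]
    rw [Finset.mul_sum]
    congr 1
    ext i
    rw [pow_add, pow_one]
  rw [this]
  rw [norm_mul, habs1, one_mul, norm_div]
  have hnum : ‖z ^ N - 1‖ ≤ 2 := by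
    calc ‖z ^ N - 1‖ ≤ ‖z ^ N‖ + ‖(1:ℂ)‖ :=
      (norm_sub_le _ _)
    _ = 1 + 1 := by rw [norm_pow, habs1, one_pow, norm_one]
    _ = 2 := by norm_num
  have hden : 0 < ‖z - 1‖ := lt_of_lt_of_le (by linarith) hlow
  rw [div_le_div_iff₀ hden (by linarith)]
  calc ‖z ^ N - 1‖ * (2 * x) ≤ 2 * (2 * x) := by
        apply mul_le_mul_of_nonneg_right hnum (by linarith)
  _ = 4 * x := by ring
  _ ≤ ‖z - 1‖ := hlow
  _ ≤ 1 * ‖z - 1‖ := by rw [one_mul]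
  -- need: ≤ 1/(2x) * abs(z-1)? careful

-- L3: orthogonality
lemma aux_ortho (m : ℤ) :
    (∫ x in (0:ℝ)..1, Complex.exp (2*π*Complex.I*m*x)) = if m = 0 then 1 else 0 := by
  rcases eq_or_ne m 0 with hm | hm
  · simp [hm]
  · rw [if_neg hm]
    have hc : (2*π*Complex.I*m : ℂ) ≠ 0 := by
      simp [Real.pi_ne_zero, Complex.I_ne_zero, hm]
    rw [integral_exp_mul_complex hc]
    have h1 : (2*π*Complex.I*(m:ℂ)) * (1:ℝ) = (m : ℂ) * (2*π*Complex.I) := by push_cast; ring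
    have h0 : (2*π*Complex.I*(m:ℂ)) * ((0:ℝ):ℂ) = 0 := by push_cast; ring
    rw [h1, h0, Complex.exp_int_mul_two_pi_mul_I, Complex.exp_zero, sub_self, zero_div]

-- L4: the inner product identity
lemma aux_inner (N : ℕ) (hN : 0 < N) :
    (∫ x in (0:ℝ)..1,
      (∑ j ∈ Finset.Icc 1 N, (liouvilleFun j : ℂ) * Complex.exp (2*π*Complex.I*j*x)) *
        (starRingEnd ℂ) (∑ k ∈ Finset.Icc 1 N, Complex.exp (2*π*Complex.I*k*x)))
      = (∑ j ∈ Finset.Icc 1 N, (liouvilleFun j : ℂ)) := by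
  have hpt : ∀ x : ℝ,
      (∑ j ∈ Finset.Icc 1 N, (liouvilleFun j : ℂ) * Complex.exp (2*π*Complex.I*j*x)) *
        (starRingEnd ℂ) (∑ k ∈ Finset.Icc 1 N, Complex.exp (2*π*Complex.I*k*x))
      = ∑ j ∈ Finset.Icc 1 N, ∑ k ∈ Finset.Icc 1 N,
          (liouvilleFun j : ℂ) * Complex.exp (2*π*Complex.I*(((j:ℤ) - (k:ℤ) : ℤ) : ℂ)*x) := by
    intro x
    rw [map_sum, Finset.sum_mul_sum]
    refine Finset.sum_congr rfl fun j _ => Finset.sum_congr rfl fun k _ => ?_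
    rw [← Complex.exp_conj, mul_assoc, ← Complex.exp_add]
    congr 2
    have : (starRingEnd ℂ) (2*π*Complex.I*k*x) = -(2*π*Complex.I*k*x) := by
      simp only [map_mul, Complex.conj_I, Complex.conj_ofReal, map_ofNat,
        Complex.conj_natCast]
      ring
    rw [this]
    push_cast
    ring
  simp_rw [hpt]
  rw [intervalIntegral.integral_finset_sum]
  · have : ∀ j ∈ Finset.Icc 1 N,
        (∫ x in (0:ℝ)..1, ∑ k ∈ Finset.Icc 1 N,
          (liouvilleFun j : ℂ) * Complex.exp (2*π*Complex.I*(((j:ℤ) - (k:ℤ) : ℤ) : ℂ)*x))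
        = (liouvilleFun j : ℂ) := by
      intro j hj
      rw [intervalIntegral.integral_finset_sum]
      · have heach : ∀ k ∈ Finset.Icc 1 N,
            (∫ x in (0:ℝ)..1, (liouvilleFun j : ℂ) *
              Complex.exp (2*π*Complex.I*(((j:ℤ) - (k:ℤ) : ℤ) : ℂ)*x))
            = (liouvilleFun j : ℂ) * (if ((j:ℤ) - (k:ℤ)) = 0 then 1 else 0) := by
          intro k _
          rw [intervalIntegral.integral_const_mul, aux_ortho ((j:ℤ) - (k:ℤ))]
        rw [Finset.sum_congr rfl heach]
        have : ∀ k : ℕ, (((j:ℤ) - (k:ℤ)) = 0) ↔ (k = j) := by intro k; omega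
        simp_rw [this, mul_ite, mul_one, mul_zero]
        rw [Finset.sum_ite_eq' (Finset.Icc 1 N)]
        rw [if_pos hj]
      · intro k _
        apply Continuous.intervalIntegrable
        exact continuous_const.mul ((Complex.continuous_exp).comp (by fun_prop))
    rw [Finset.sum_congr rfl this]
  · intro j _
    apply Continuous.intervalIntegrable
    apply continuous_finset_sum
    intro k _
    exact continuous_const.mul ((Complex.continuous_exp).comp (by fun_prop))

theorem liouville_integral_bound_implies_partial_sum_bound
    (α : ℝ) (hα : 1 < α) (c : ℝ) (hc : 0 < c)
    (h : ∀ N : ℕ, 0 < N →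
      ∫ x in (0:ℝ)..1,
          (‖(N : ℂ) ^ (-(1/2 : ℂ)) *
            ∑ j ∈ Finset.Icc 1 N, (liouvilleFun j : ℂ) *
              Complex.exp (2 * Real.pi * Complex.I * j * x)‖) ^ α ≤ c) :
    ∃ C : ℝ, 0 < C ∧ ∀ N : ℕ, 0 < N →
      |∑ j ∈ Finset.Icc 1 N, (liouvilleFun j : ℝ)| ≤ C * (N : ℝ) ^ (1/2 + 1/α) := by
  have hα0 : (0:ℝ) < α := lt_trans one_pos hα
  set q : ℝ := α / (α - 1) with hqdef
  have hpq : α.HolderConjugate q := Real.HolderConjugate.conjExponent hα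
  have hq1 : 1 < q := hpq.symm.lt
  have hq0 : (0:ℝ) < q := lt_trans one_pos hq1
  clear_value q
  refine ⟨c ^ (1/α) * α ^ (1/q), by positivity, ?_⟩
  intro N hN
  have hNpos : (0:ℝ) < N := Nat.cast_pos.mpr hN
  set F : ℝ → ℂ := fun x => ∑ j ∈ Finset.Icc 1 N, (liouvilleFun j : ℂ) *
      Complex.exp (2*π*Complex.I*j*x) with hF
  set D : ℝ → ℂ := fun x => ∑ j ∈ Finset.Icc 1 N, Complex.exp (2*π*Complex.I*j*x) with hD
  set μ : Measure ℝ := volume.restrict (Set.Ioc (0:ℝ) 1) with hμ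
  have hfin : IsFiniteMeasure μ := by
    constructor
    rw [hμ, Measure.restrict_apply_univ]
    exact measure_Ioc_lt_top
  have hFc : Continuous F := by
    apply continuous_finset_sum; intro j _
    exact continuous_const.mul ((Complex.continuous_exp).comp (by fun_prop))
  have hDc : Continuous D := by
    apply continuous_finset_sum; intro j _
    exact (Complex.continuous_exp).comp (by fun_prop)
  have habsexp : ∀ (j : ℕ) (x : ℝ), ‖Complex.exp (2*π*Complex.I*j*x)‖ = 1 := by
    intro j x
    rw [show (2*π*Complex.I*(j:ℂ)*(x:ℂ)) = ((2*π*j*x : ℝ) : ℂ) * Complex.I by push_cast; ring]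
    exact Complex.norm_exp_ofReal_mul_I _
  have habsl : ∀ j : ℕ, ‖(liouvilleFun j : ℂ)‖ = 1 := by
    intro j
    rw [liouvilleFun]
    push_cast
    rw [norm_pow]
    simp
  have hFb : ∀ x, ‖F x‖ ≤ (N:ℝ) := by
    intro x
    calc ‖F x‖ ≤ ∑ j ∈ Finset.Icc 1 N, ‖(liouvilleFun j : ℂ) * Complex.exp (2*π*Complex.I*j*x)‖ :=
      norm_sum_le _ _
    _ = ∑ j ∈ Finset.Icc 1 N, (1:ℝ) := by
      refine Finset.sum_congr rfl fun j _ => ?_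
      rw [norm_mul, habsl j, habsexp j x, one_mul]
    _ = (N:ℝ) := by simp
  have hDb : ∀ x, ‖D x‖ ≤ (N:ℝ) := by
    intro x
    calc ‖D x‖ ≤ ∑ j ∈ Finset.Icc 1 N, ‖Complex.exp (2*π*Complex.I*j*x)‖ := norm_sum_le _ _
    _ = (N:ℝ) := by
      rw [Finset.sum_congr rfl fun j _ => (by rw [habsexp j x] : _ = (1:ℝ))]
      simp
  have hFm : MemLp F (ENNReal.ofReal α) μ :=
    MemLp.of_bound hFc.aestronglyMeasurable (N:ℝ) (ae_of_all _ hFb)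
  have hDm : MemLp (fun x => (starRingEnd ℂ) (D x)) (ENNReal.ofReal q) μ :=
    MemLp.of_bound (Complex.continuous_conj.comp hDc).aestronglyMeasurable (N:ℝ)
      (ae_of_all _ (fun x => by rw [RCLike.norm_conj]; exact hDb x))
  -- Step 1: |S| ≤ ∫ ‖F‖ ‖conj D‖
  have hS1 : |∑ j ∈ Finset.Icc 1 N, (liouvilleFun j : ℝ)| ≤
      ∫ x, ‖F x‖ * ‖(starRingEnd ℂ) (D x)‖ ∂μ := by
    have hcast : ((∑ j ∈ Finset.Icc 1 N, (liouvilleFun j : ℝ) : ℝ) : ℂ)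
        = ∑ j ∈ Finset.Icc 1 N, (liouvilleFun j : ℂ) := by push_cast; ring
    calc |∑ j ∈ Finset.Icc 1 N, (liouvilleFun j : ℝ)|
        = ‖((∑ j ∈ Finset.Icc 1 N, (liouvilleFun j : ℝ) : ℝ) : ℂ)‖ := by
          rw [Complex.norm_real, Real.norm_eq_abs]
    _ = ‖∫ x in (0:ℝ)..1, F x * (starRingEnd ℂ) (D x)‖ := by rw [hcast, ← aux_inner N hN]
    _ = ‖∫ x, F x * (starRingEnd ℂ) (D x) ∂μ‖ := by
          rw [intervalIntegral.integral_of_le (by norm_num : (0:ℝ) ≤ 1)]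
    _ ≤ ∫ x, ‖F x * (starRingEnd ℂ) (D x)‖ ∂μ := norm_integral_le_integral_norm _
    _ = ∫ x, ‖F x‖ * ‖(starRingEnd ℂ) (D x)‖ ∂μ := by simp_rw [norm_mul]
  -- Step 2: Hölder
  have hS2 := MeasureTheory.integral_mul_norm_le_Lp_mul_Lq (μ := μ) hpq hFm hDm
  -- Step 3: bound on ∫ ‖F‖^α
  have hIF : (∫ x, ‖F x‖ ^ α ∂μ) ≤ c * (N:ℝ) ^ (α/2) := by
    have hh := h N hN
    have hk : ∀ x : ℝ, (‖(N : ℂ) ^ (-(1/2 : ℂ)) *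
        ∑ j ∈ Finset.Icc 1 N, (liouvilleFun j : ℂ) *
          Complex.exp (2 * Real.pi * Complex.I * j * x)‖) ^ α
        = (N:ℝ) ^ (-(α/2)) * ‖F x‖ ^ α := by
      intro x
      rw [norm_mul]
      have h1 : ‖(N : ℂ) ^ (-(1/2 : ℂ))‖ = (N:ℝ) ^ (-(1/2) : ℝ) := by
        rw [show ((N:ℂ)) = (((N:ℝ)):ℂ) by push_cast; rfl,
          Complex.norm_cpow_eq_rpow_re_of_pos hNpos]
        norm_num
      rw [h1, Real.mul_rpow (by positivity) (norm_nonneg _),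
        ← Real.rpow_mul hNpos.le]
      norm_num
      exact congrArg (fun t : ℝ => (N:ℝ) ^ t * ‖F x‖ ^ α) (by ring)
    simp_rw [hk] at hh
    rw [intervalIntegral.integral_const_mul] at hh
    have hμeq : (∫ x, ‖F x‖ ^ α ∂μ) = ∫ x in (0:ℝ)..1, ‖F x‖ ^ α :=
      (intervalIntegral.integral_of_le (by norm_num : (0:ℝ) ≤ 1)).symm
    rw [hμeq]
    have hkpos : (0:ℝ) < (N:ℝ) ^ (-(α/2)) := Real.rpow_pos_of_pos hNpos _
    have hinv : (N:ℝ) ^ (-(α/2)) * (N:ℝ) ^ (α/2) = 1 := by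
      rw [← Real.rpow_add hNpos]; norm_num
    have hmul := mul_le_mul_of_nonneg_right hh (Real.rpow_pos_of_pos hNpos (α/2)).le
    nlinarith [hmul, hinv]
  -- Step 4: bound on ∫ ‖D‖^q
  have hID : (∫ x, ‖(starRingEnd ℂ) (D x)‖ ^ q ∂μ) ≤ α * (N:ℝ) ^ (q - 1) := by
    have hconj : ∀ x, ‖(starRingEnd ℂ) (D x)‖ = ‖D x‖ := fun x => RCLike.norm_conj _
    simp_rw [hconj]
    set g : ℝ → ℝ := fun x => ‖D x‖ ^ q with hg
    have hq1' : (0:ℝ) < q - 1 := by linarith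
    have hN1 : (1:ℝ) ≤ (N:ℝ) := Nat.one_le_cast.mpr hN
    have hgc : Continuous g := hDc.norm.rpow_const (fun x => Or.inr hq0.le)
    have hgint : ∀ a b : ℝ, IntervalIntegrable g volume a b :=
      fun a b => hgc.intervalIntegrable a b
    have hNq0 : (0:ℝ) ≤ (N:ℝ)^(q-1) := Real.rpow_nonneg hNpos.le _
    -- symmetry of g about 1/2
    have hsym : ∀ x : ℝ, g (1 - x) = g x := by
      intro x
      have hDD : D (1 - x) = (starRingEnd ℂ) (D x) := by
        rw [hD, map_sum]
        refine Finset.sum_congr rfl fun j _ => ?_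
        rw [← Complex.exp_conj]
        have hc1 : (starRingEnd ℂ) (2*π*Complex.I*(j:ℂ)*(x:ℂ)) = -(2*π*Complex.I*j*x) := by
          simp only [map_mul, Complex.conj_I, Complex.conj_ofReal, map_ofNat,
            Complex.conj_natCast]
          ring
        rw [hc1]
        have h2 : (2*π*Complex.I*(j:ℂ)*(((1 - x : ℝ)):ℂ))
            = ((j:ℤ):ℂ)*(2*π*Complex.I) + (-(2*π*Complex.I*j*x)) := by push_cast; ring
        rw [h2, Complex.exp_add, Complex.exp_int_mul_two_pi_mul_I, one_mul]
      simp only [hg]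
      rw [hDD, RCLike.norm_conj]
    have hμeq : (∫ x, g x ∂μ) = ∫ x in (0:ℝ)..1, g x :=
      (intervalIntegral.integral_of_le (by norm_num : (0:ℝ) ≤ 1)).symm
    rw [show (∫ x, ‖D x‖ ^ q ∂μ) = ∫ x, g x ∂μ from rfl, hμeq]
    have hsplit : (∫ x in (0:ℝ)..1, g x)
        = (∫ x in (0:ℝ)..(1/2:ℝ), g x) + ∫ x in (1/2:ℝ)..1, g x :=
      (intervalIntegral.integral_add_adjacent_intervals (hgint 0 (1/2)) (hgint (1/2) 1)).symm
    have hsecond : (∫ x in (1/2:ℝ)..1, g x) = ∫ x in (0:ℝ)..(1/2:ℝ), g x := by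
      have he : (∫ x in (1/2:ℝ)..1, g x) = ∫ x in (1/2:ℝ)..1, g (1 - x) :=
        intervalIntegral.integral_congr fun x _ => (hsym x).symm
      rw [he, intervalIntegral.integral_comp_sub_left g 1]
      norm_num
    set a : ℝ := 1/(2*(N:ℝ)) with ha
    have ha0 : (0:ℝ) < a := by positivity
    have ha2 : a ≤ 1/2 := by
      rw [ha, div_le_div_iff₀ (by positivity) (by norm_num)]
      nlinarith
    have hhalf : (∫ x in (0:ℝ)..(1/2:ℝ), g x)
        ≤ (N:ℝ)^(q-1)/2 + (N:ℝ)^(q-1)/(2*(q-1)) := by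
      have hsplit2 : (∫ x in (0:ℝ)..(1/2:ℝ), g x)
          = (∫ x in (0:ℝ)..a, g x) + ∫ x in a..(1/2:ℝ), g x :=
        (intervalIntegral.integral_add_adjacent_intervals (hgint 0 a) (hgint a (1/2))).symm
      have hpart1 : (∫ x in (0:ℝ)..a, g x) ≤ (N:ℝ)^(q-1)/2 := by
        have hb : ∀ x ∈ Set.Icc (0:ℝ) a, g x ≤ (N:ℝ)^q :=
          fun x _ => Real.rpow_le_rpow (norm_nonneg _) (hDb x) hq0.le
        calc (∫ x in (0:ℝ)..a, g x) ≤ ∫ x in (0:ℝ)..a, (N:ℝ)^q :=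
          intervalIntegral.integral_mono_on ha0.le (hgint 0 a) intervalIntegrable_const hb
        _ = a * (N:ℝ)^q := by rw [intervalIntegral.integral_const]; simp [smul_eq_mul]
        _ = (N:ℝ)^(q-1)/2 := by
            have hNq : (N:ℝ)^q = (N:ℝ)^(q-1) * (N:ℝ) := by
              have h' := Real.rpow_add hNpos (q-1) 1
              rw [Real.rpow_one, show q-1+1 = q by ring] at h'
              exact h'
            rw [ha, hNq]
            field_simp
      have hpart2 : (∫ x in a..(1/2:ℝ), g x) ≤ (N:ℝ)^(q-1)/(2*(q-1)) := by
        have hb : ∀ x ∈ Set.Icc a (1/2:ℝ), g x ≤ (2:ℝ)^(-q) * x^(-q) := by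
          intro x hx
          have hx0 : (0:ℝ) < x := lt_of_lt_of_le ha0 hx.1
          have hd := aux_dirichlet N hx0 hx.2
          have hgx : g x ≤ (1/(2*x))^q := by
            apply Real.rpow_le_rpow (norm_nonneg _) _ hq0.le
            exact hd
          have heq : ((1:ℝ)/(2*x))^q = (2:ℝ)^(-q) * x^(-q) := by
            rw [show ((1:ℝ)/(2*x)) = (2:ℝ)⁻¹ * x⁻¹ by field_simp,
              Real.mul_rpow (by norm_num) (by positivity),
              ← Real.rpow_neg_one (2:ℝ), ← Real.rpow_neg_one x,
              ← Real.rpow_mul (by norm_num : (0:ℝ) ≤ 2), ← Real.rpow_mul hx0.le]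
            norm_num
          exact le_trans hgx (le_of_eq heq)
        have hint2 : IntervalIntegrable (fun x : ℝ => (2:ℝ)^(-q) * x^(-q)) volume a (1/2) := by
          apply ContinuousOn.intervalIntegrable
          apply ContinuousOn.mul continuousOn_const
          apply ContinuousOn.rpow_const continuousOn_id
          intro x hx
          rw [Set.uIcc_of_le ha2] at hx
          exact Or.inl (ne_of_gt (lt_of_lt_of_le ha0 hx.1))
        have hcomp : (∫ x in a..(1/2:ℝ), g x) ≤ ∫ x in a..(1/2:ℝ), (2:ℝ)^(-q) * x^(-q) :=
          intervalIntegral.integral_mono_on ha2 (hgint a _) hint2 hb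
        have hval : (∫ x in a..(1/2:ℝ), x^(-q))
            = ((1/2:ℝ)^(-q+1) - a^(-q+1))/(-q+1) := by
          rw [integral_rpow (Or.inr ⟨by intro hq; rw [neg_eq_iff_eq_neg] at hq; linarith [hq],
            by rw [Set.uIcc_of_le ha2]; intro hmem; exact absurd hmem.1 (not_le.mpr ha0)⟩)]
        have hub : ((1/2:ℝ)^(-q+1) - a^(-q+1))/(-q+1) ≤ a^(-q+1)/(q-1) := by
          have hne1 : (-q+1 : ℝ) ≠ 0 := by linarith
          have hne2 : (q-1 : ℝ) ≠ 0 := ne_of_gt hq1'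
          have hrw0 : ((1/2:ℝ)^(-q+1) - a^(-q+1))/(-q+1)
              = (a^(-q+1) - (1/2:ℝ)^(-q+1))/(q-1) := by
            rw [div_eq_div_iff hne1 hne2]
            ring
          rw [hrw0]
          have hpos1 : (0:ℝ) < (1/2:ℝ)^(-q+1) := Real.rpow_pos_of_pos (by norm_num) _
          rw [div_le_div_iff_of_pos_right hq1']
          linarith
        have haN : a^(-q+1) = (2:ℝ)^(q-1) * (N:ℝ)^(q-1) := by
          rw [ha, show (1/(2*(N:ℝ))) = ((2*(N:ℝ))⁻¹) by field_simp,
            ← Real.rpow_neg_one (2*(N:ℝ)),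
            ← Real.rpow_mul (by positivity : (0:ℝ) ≤ 2*(N:ℝ)),
            show ((-1:ℝ) * (-q+1)) = q - 1 by ring,
            Real.mul_rpow (by norm_num : (0:ℝ) ≤ 2) hNpos.le]
        have h2q : (2:ℝ)^(-q) * (2:ℝ)^(q-1) = 1/2 := by
          rw [← Real.rpow_add (by norm_num : (0:ℝ) < 2),
            show (-q + (q-1)) = (-1:ℝ) by ring, Real.rpow_neg_one]
          norm_num
        calc (∫ x in a..(1/2:ℝ), g x) ≤ ∫ x in a..(1/2:ℝ), (2:ℝ)^(-q) * x^(-q) := hcomp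
        _ = (2:ℝ)^(-q) * ∫ x in a..(1/2:ℝ), x^(-q) :=
          intervalIntegral.integral_const_mul _ _
        _ ≤ (2:ℝ)^(-q) * (a^(-q+1)/(q-1)) := by
            rw [hval]
            exact mul_le_mul_of_nonneg_left hub (Real.rpow_nonneg (by norm_num) _)
        _ = (N:ℝ)^(q-1)/(2*(q-1)) := by
            rw [haN, show (2:ℝ)^(-q) * ((2:ℝ)^(q-1) * (N:ℝ)^(q-1)/(q-1))
              = ((2:ℝ)^(-q) * (2:ℝ)^(q-1)) * (N:ℝ)^(q-1)/(q-1) by ring, h2q]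
            have h3 : (q - 1 : ℝ) ≠ 0 := ne_of_gt hq1'
            field_simp
      rw [hsplit2]
      linarith
    have hqα : 1 + 1/(q-1) = α := by
      rw [hqdef]
      have hα1 : α - 1 ≠ 0 := by linarith
      field_simp
      ring
    rw [hsplit, hsecond]
    have : (N:ℝ)^(q-1)/2 + (N:ℝ)^(q-1)/(2*(q-1)) + ((N:ℝ)^(q-1)/2 + (N:ℝ)^(q-1)/(2*(q-1)))
        = (1 + 1/(q-1)) * (N:ℝ)^(q-1) := by field_simp; ring
    nlinarith [hhalf, hqα, hNq0]
  -- Step 5: combine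
  have hIF0 : 0 ≤ ∫ x, ‖F x‖ ^ α ∂μ :=
    integral_nonneg fun x => Real.rpow_nonneg (norm_nonneg _) _
  have hID0 : 0 ≤ ∫ x, ‖(starRingEnd ℂ) (D x)‖ ^ q ∂μ :=
    integral_nonneg fun x => Real.rpow_nonneg (norm_nonneg _) _
  have hfinal : (∫ x, ‖F x‖ ^ α ∂μ) ^ (1/α) * (∫ x, ‖(starRingEnd ℂ) (D x)‖ ^ q ∂μ) ^ (1/q)
      ≤ (c * (N:ℝ) ^ (α/2)) ^ (1/α) * (α * (N:ℝ) ^ (q-1)) ^ (1/q) := by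
    apply mul_le_mul
    · exact Real.rpow_le_rpow hIF0 hIF (by positivity)
    · exact Real.rpow_le_rpow hID0 hID (by positivity)
    · positivity
    · positivity
  have hrw : (c * (N:ℝ) ^ (α/2)) ^ (1/α) * (α * (N:ℝ) ^ (q-1)) ^ (1/q)
      = c ^ (1/α) * α ^ (1/q) * (N:ℝ) ^ (1/2 + 1/α) := by
    rw [Real.mul_rpow hc.le (by positivity), Real.mul_rpow hα0.le (by positivity),
      ← Real.rpow_mul hNpos.le, ← Real.rpow_mul hNpos.le]
    have hα1 : α - 1 ≠ 0 := by linarith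
    have hαne : α ≠ 0 := by linarith
    have h1 : α / 2 * (1/α) = 1/2 := by field_simp
    have h2 : (q - 1) * (1/q) = 1/α := by
      rw [hqdef]
      field_simp
      ring
    rw [h1, h2, Real.rpow_add hNpos]
    ring
  calc |∑ j ∈ Finset.Icc 1 N, (liouvilleFun j : ℝ)|
      ≤ ∫ x, ‖F x‖ * ‖(starRingEnd ℂ) (D x)‖ ∂μ := hS1
  _ ≤ (∫ x, ‖F x‖ ^ α ∂μ) ^ (1/α) * (∫ x, ‖(starRingEnd ℂ) (D x)‖ ^ q ∂μ) ^ (1/q) := hS2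
  _ ≤ (c * (N:ℝ) ^ (α/2)) ^ (1/α) * (α * (N:ℝ) ^ (q-1)) ^ (1/q) := hfinal
  _ = c ^ (1/α) * α ^ (1/q) * (N:ℝ) ^ (1/2 + 1/α) := hrw
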